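/- Let G be an arbitrary group and let S = ⊕_{g∈G} S_g be an epsilon-strongly G-graded ring with principal component R = S_e. If the support Supp(S) = {g ∈ G : S_g ≠ {0}} is finite, then S is finitely generated as a left R-module and finitely generated as a right R-module (with R acting by ring multiplication in S). -/

import Mathlib

open Pointwise

private lemma mem_mul_list {S : Type*} [Ring S] {P Q : AddSubgroup S} {t : S}
    (h : t ∈ P * Q) :
    ∃ l : List (S × S), (∀ p ∈ l, p.1 ∈ P ∧ p.2 ∈ Q) ∧
      t = (l.map fun p => p.1 * p.2).sum := by
  refine AddSubmonoid.mul_induction_on h ?_ ?_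
  · intro m hm n hn
    exact ⟨[(m, n)], by simp_all, by simp⟩
  · rintro a b ⟨la, hla, rfl⟩ ⟨lb, hlb, rfl⟩
    refine ⟨la ++ lb, ?_, by simp⟩
    intro p hp
    rcases List.mem_append.1 hp with h | h
    exacts [hla p h, hlb p h]

private lemma list_to_finset_left {S : Type*} [Ring S] [DecidableEq S] (R : Subring S)
    (F : Finset S) (l : List (S × S)) (hl : ∀ p ∈ l, p.1 ∈ R ∧ p.2 ∈ F) :
    ∃ c : S → S, (∀ f ∈ F, c f ∈ R) ∧
      (l.map fun p => p.1 * p.2).sum = ∑ f ∈ F, c f * f := by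
  induction l with
  | nil => exact ⟨0, fun f _ => by simpa using R.zero_mem, by simp⟩
  | cons p l ih =>
    obtain ⟨c, hc, hsum⟩ := ih fun q hq => hl q (List.mem_cons_of_mem _ hq)
    obtain ⟨hp1, hp2⟩ := hl p (List.mem_cons_self)
    refine ⟨fun f => (if f = p.2 then p.1 else 0) + c f, ?_, ?_⟩
    · intro f hf
      exact R.add_mem (by split <;> simp [hp1, R.zero_mem]) (hc f hf)
    · simp only [List.map_cons, List.sum_cons, hsum, add_mul, Finset.sum_add_distrib]
      congr 1
      rw [Finset.sum_congr rfl (fun f _ => by rw [ite_mul, zero_mul]),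
        Finset.sum_ite_eq' F p.2 (fun _ => p.1 * _)]
      simp [hp2]

private lemma list_to_finset_right {S : Type*} [Ring S] [DecidableEq S] (R : Subring S)
    (F : Finset S) (l : List (S × S)) (hl : ∀ p ∈ l, p.1 ∈ F ∧ p.2 ∈ R) :
    ∃ c : S → S, (∀ f ∈ F, c f ∈ R) ∧
      (l.map fun p => p.1 * p.2).sum = ∑ f ∈ F, f * c f := by
  induction l with
  | nil => exact ⟨0, fun f _ => by simpa using R.zero_mem, by simp⟩
  | cons p l ih =>
    obtain ⟨c, hc, hsum⟩ := ih fun q hq => hl q (List.mem_cons_of_mem _ hq)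
    obtain ⟨hp1, hp2⟩ := hl p (List.mem_cons_self)
    refine ⟨fun f => (if f = p.1 then p.2 else 0) + c f, ?_, ?_⟩
    · intro f hf
      exact R.add_mem (by split <;> simp [hp2, R.zero_mem]) (hc f hf)
    · simp only [List.map_cons, List.sum_cons, hsum, mul_add, Finset.sum_add_distrib]
      congr 1
      rw [Finset.sum_congr rfl (fun f _ => by rw [mul_ite, mul_zero]),
        Finset.sum_ite_eq' F p.1 (fun f => f * p.2)]
      simp [hp1]

/-- `A` is a `G`-grading of the ring `S`: `S` is the internal direct sum of the
additive subgroups `A g`, and `A g * A h ⊆ A (g * h)` for all `g h : G`. -/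
def IsGrading {G S : Type*} [Group G] [Ring S] [DecidableEq G]
    (A : G → AddSubgroup S) : Prop :=
  DirectSum.IsInternal A ∧ ∀ g h : G, ∀ x ∈ A g, ∀ y ∈ A h, x * y ∈ A (g * h)

/-- The grading `A` is epsilon-strong: it is symmetric (`A g * A g⁻¹ * A g = A g`) and
for every `g` there is `ε g ∈ A g * A g⁻¹` acting as a left identity on `A g`, with
`ε g⁻¹` acting as a right identity on `A g`.  Here `P * Q` denotes the additive subgroup
generated by products of elements of `P` and `Q`. -/
def IsEpsilonStrong {G S : Type*} [Group G] [Ring S] (A : G → AddSubgroup S) : Prop :=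
  (∀ g : G, A g * A g⁻¹ * A g = A g) ∧
  ∃ ε : G → S, ∀ g : G, ε g ∈ A g * A g⁻¹ ∧ ∀ x ∈ A g, ε g * x = x ∧ x * ε g⁻¹ = x

/-- If `S` is an epsilon-strongly `G`-graded ring with principal component `R = S_e` and
the support `{g : G | S_g ≠ {0}}` is finite, then `S` is finitely generated both as a left
`R`-module and as a right `R`-module (with `R` acting by ring multiplication in `S`). -/
theorem epsilonStrong_finite_support_finitely_generated
    {G S : Type*} [Group G] [Ring S] [DecidableEq G]
    (A : G → AddSubgroup S) (hgrading : IsGrading A) (heps : IsEpsilonStrong A)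
    (R : Subring S) (hR : (R : Set S) = (A 1 : Set S))
    (hsupp : {g : G | A g ≠ ⊥}.Finite) :
    (∃ F : Finset S, ∀ s : S,
      ∃ c : S → S, (∀ f ∈ F, c f ∈ R) ∧ s = ∑ f ∈ F, c f * f) ∧
    (∃ F : Finset S, ∀ s : S,
      ∃ c : S → S, (∀ f ∈ F, c f ∈ R) ∧ s = ∑ f ∈ F, f * c f) := by
  classical
  obtain ⟨hinternal, hmul⟩ := hgrading
  obtain ⟨hsym, ε, hε⟩ := heps
  -- every element lies in any additive subgroup containing all `A g`
  have hdecomp : ∀ T : AddSubgroup S, (∀ g : G, ∀ x ∈ A g, x ∈ T) → ∀ s : S, s ∈ T := by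
    intro T hT s
    obtain ⟨x, rfl⟩ := hinternal.surjective s
    rw [DirectSum.coeAddMonoidHom_eq_dfinsuppSum, DFinsupp.sum]
    exact AddSubgroup.sum_mem T fun g _ => hT g _ (x g).2
  have key : ∀ (x : S) (l : List (S × S)),
      x * (l.map fun p => p.1 * p.2).sum
        = ((l.map fun p => (x * p.1, p.2)).map fun p => p.1 * p.2).sum := by
    intro x l
    induction l with
    | nil => simp
    | cons p l ih => simp [mul_add, ih, mul_assoc]
  have key' : ∀ (x : S) (l : List (S × S)),
      (l.map fun p => p.1 * p.2).sum * x
        = ((l.map fun p => (p.1, p.2 * x)).map fun p => p.1 * p.2).sum := by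
    intro x l
    induction l with
    | nil => simp
    | cons p l ih => simp [add_mul, ih, mul_assoc]
  constructor
  · -- left module generation
    have hlist : ∀ g : G, ∃ l : List (S × S),
        (∀ p ∈ l, p.1 ∈ A g⁻¹ ∧ p.2 ∈ A g) ∧
          ε g⁻¹ = (l.map fun p => p.1 * p.2).sum :=
      fun g => mem_mul_list (by simpa using (hε g⁻¹).1)
    choose L hL hLsum using hlist
    set F : Finset S := hsupp.toFinset.biUnion
      (fun g => ((L g).map Prod.snd).toFinset) with hF
    refine ⟨F, ?_⟩
    set T : AddSubgroup S :=
      { carrier := {s | ∃ c : S → S, (∀ f ∈ F, c f ∈ R) ∧ s = ∑ f ∈ F, c f * f}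
        zero_mem' := ⟨0, fun f _ => by simpa using R.zero_mem, by simp⟩
        add_mem' := by
          rintro a b ⟨c1, hc1, rfl⟩ ⟨c2, hc2, rfl⟩
          exact ⟨c1 + c2, fun f hf => R.add_mem (hc1 f hf) (hc2 f hf),
            by simp [add_mul, Finset.sum_add_distrib]⟩
        neg_mem' := by
          rintro a ⟨c, hc, rfl⟩
          exact ⟨-c, fun f hf => R.neg_mem (hc f hf),
            by simp [neg_mul, Finset.sum_neg_distrib]⟩ } with hT
    intro s
    refine hdecomp T ?_ s
    intro g x hx
    by_cases hg : g ∈ hsupp.toFinset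
    · have hx' : x = x * ε g⁻¹ := ((hε g).2 x hx).2.symm
      have hmemF : ∀ q ∈ (L g).map fun p => (x * p.1, p.2), q.1 ∈ R ∧ q.2 ∈ F := by
        rintro q hq
        simp only [List.mem_map] at hq
        obtain ⟨p, hp, rfl⟩ := hq
        obtain ⟨hp1, hp2⟩ := hL g p hp
        constructor
        · have h1 : x * p.1 ∈ A (g * g⁻¹) := hmul g g⁻¹ x hx p.1 hp1
          rw [mul_inv_cancel] at h1
          show x * p.1 ∈ (R : Set S)
          rw [hR]; exact h1
        · simp only [hF, Finset.mem_biUnion]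
          refine ⟨g, hg, ?_⟩
          simp only [List.mem_toFinset, List.mem_map]
          exact ⟨p, hp, rfl⟩
      obtain ⟨c, hc, hsum⟩ := list_to_finset_left R F
        ((L g).map fun p => (x * p.1, p.2)) hmemF
      exact ⟨c, hc, by rw [hx', hLsum g, key x (L g), hsum]⟩
    · have hbot : A g = ⊥ := by
        by_contra hne
        exact hg (hsupp.mem_toFinset.2 hne)
      have : x = 0 := by simpa [hbot] using hx
      rw [this]; exact T.zero_mem
  · -- right module generation
    have hlist : ∀ g : G, ∃ l : List (S × S),
        (∀ p ∈ l, p.1 ∈ A g ∧ p.2 ∈ A g⁻¹) ∧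
          ε g = (l.map fun p => p.1 * p.2).sum :=
      fun g => mem_mul_list (hε g).1
    choose L hL hLsum using hlist
    set F : Finset S := hsupp.toFinset.biUnion
      (fun g => ((L g).map Prod.fst).toFinset) with hF
    refine ⟨F, ?_⟩
    set T : AddSubgroup S :=
      { carrier := {s | ∃ c : S → S, (∀ f ∈ F, c f ∈ R) ∧ s = ∑ f ∈ F, f * c f}
        zero_mem' := ⟨0, fun f _ => by simpa using R.zero_mem, by simp⟩
        add_mem' := by
          rintro a b ⟨c1, hc1, rfl⟩ ⟨c2, hc2, rfl⟩
          exact ⟨c1 + c2, fun f hf => R.add_mem (hc1 f hf) (hc2 f hf),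
            by simp [mul_add, Finset.sum_add_distrib]⟩
        neg_mem' := by
          rintro a ⟨c, hc, rfl⟩
          exact ⟨-c, fun f hf => R.neg_mem (hc f hf),
            by simp [mul_neg, Finset.sum_neg_distrib]⟩ } with hT
    intro s
    refine hdecomp T ?_ s
    intro g x hx
    by_cases hg : g ∈ hsupp.toFinset
    · have hx' : x = ε g * x := ((hε g).2 x hx).1.symm
      have hmemF : ∀ q ∈ (L g).map fun p => (p.1, p.2 * x), q.1 ∈ F ∧ q.2 ∈ R := by
        rintro q hq
        simp only [List.mem_map] at hq
        obtain ⟨p, hp, rfl⟩ := hq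
        obtain ⟨hp1, hp2⟩ := hL g p hp
        constructor
        · simp only [hF, Finset.mem_biUnion]
          refine ⟨g, hg, ?_⟩
          simp only [List.mem_toFinset, List.mem_map]
          exact ⟨p, hp, rfl⟩
        · have h1 : p.2 * x ∈ A (g⁻¹ * g) := hmul g⁻¹ g p.2 hp2 x hx
          rw [inv_mul_cancel] at h1
          show p.2 * x ∈ (R : Set S)
          rw [hR]; exact h1
      obtain ⟨c, hc, hsum⟩ := list_to_finset_right R F
        ((L g).map fun p => (p.1, p.2 * x)) hmemF
      exact ⟨c, hc, by rw [hx', hLsum g, key' x (L g), hsum]⟩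
    · have hbot : A g = ⊥ := by
        by_contra hne
        exact hg (hsupp.mem_toFinset.2 hne)
      have : x = 0 := by simpa [hbot] using hx
      rw [this]; exact T.zero_mem
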